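/- For any vertex t of an alternating base tree T with dist^β(t) < ∞, the unorthodox distance exceeds the height of a minimum incoming edge: dist^β(t) > hlevel(e*(t)). -/

import Mathlib

open SimpleGraph
open scoped Classical

variable {V : Type*} [Fintype V] [DecidableEq V]

/-- A matching system `(G, M)` in which a super free vertex `f` has been added:
`U` is the set of free vertices of the original system, and for each `u ∈ U`
the vertex `mid u` forms the length-two alternating path `f - mid u - u`
(with `{f, mid u} ∉ M` and `{mid u, u} ∈ M`).  After the addition, `f` is the
unique free vertex. -/
structure Sys (V : Type*) [Fintype V] [DecidableEq V] where
  G : SimpleGraph V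
  M : Set (Sym2 V)
  f : V
  U : Set V
  mid : V → V
  M_sub : M ⊆ G.edgeSet
  matching : ∀ v : V, ∀ e₁ ∈ M, ∀ e₂ ∈ M, v ∈ e₁ → v ∈ e₂ → e₁ = e₂
  f_free : ∀ e ∈ M, f ∉ e
  others_matched : ∀ v : V, v ≠ f → ∃ e ∈ M, v ∈ e
  U_spec : ∀ u ∈ U, G.Adj f (mid u) ∧ s(f, mid u) ∉ M ∧ G.Adj (mid u) u ∧ s(mid u, u) ∈ M
  mid_deg : ∀ u ∈ U, ∀ w : V, G.Adj (mid u) w → w = f ∨ w = u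
  f_adj : ∀ w : V, G.Adj f w → ∃ u ∈ U, w = mid u
  mid_inj : ∀ u ∈ U, ∀ u' ∈ U, mid u = mid u' → u = u'

namespace Sys

variable (S : Sys V)

/-- An alternating path of the matching system: a simple path whose consecutive
edges alternate membership in `M`. -/
def IsAltPath {a b : V} (p : S.G.Walk a b) : Prop :=
  p.IsPath ∧ List.Chain' (fun e₁ e₂ => (e₁ ∈ S.M ↔ e₂ ∉ S.M)) p.edges

/-- `adist S θ u` is the length of a shortest alternating path from `f` to `u`
whose length has parity `θ` (`true` = odd, `false` = even); `⊤` if none exists. -/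
noncomputable def adist (θ : Bool) (u : V) : ℕ∞ :=
  sInf {n : ℕ∞ | ∃ p : S.G.Walk S.f u,
    S.IsAltPath p ∧ (p.length : ℕ∞) = n ∧ (Odd p.length ↔ θ = true)}

/-- The orthodox parity `α(u)` of `u`: the parity with smaller alternating distance. -/
noncomputable def op (u : V) : Bool :=
  if S.adist true u < S.adist false u then true else false

/-- The orthodox distance `dist^α(u)`. -/
noncomputable def distOrth (u : V) : ℕ∞ := S.adist (S.op u) u

/-- The unorthodox distance `dist^β(u)`. -/
noncomputable def distUnorth (u : V) : ℕ∞ := S.adist (!S.op u) u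

/-- `ρ(e)`: `true` (= odd) iff `e` is a matching edge. -/
noncomputable def rho (e : Sym2 V) : Bool := if e ∈ S.M then true else false

/-- `EP(u)`: the set of edges `e` incident to `u` such that some shortest orthodox
alternating path from `f` to `u` terminates with `e`. -/
def EP (u : V) : Set (Sym2 V) :=
  {e | ∃ p : S.G.Walk S.f u, S.IsAltPath p ∧ (p.length : ℕ∞) = S.distOrth u ∧
        p.edges.getLast? = some e}

/-- `P(u)`: the set of immediate predecessors of `u` on shortest orthodox
alternating paths. -/
def Pset (u : V) : Set V := {u' | s(u', u) ∈ S.EP u}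

/-- `EP = ⋃_u EP(u)`. -/
def EPall : Set (Sym2 V) := ⋃ u : V, S.EP u

/-- The volume `vlevel(e) = dist^{ρ(e)}(y) + dist^{ρ(e)}(z) + 1` of an edge `e = {y,z}`. -/
noncomputable def vlevel (e : Sym2 V) : ℕ∞ :=
  Sym2.lift ⟨fun y z => S.adist (S.rho e) y + S.adist (S.rho e) z + 1,
    fun y z => by ring⟩ e

/-- The height `hlevel(e) = max (dist^{ρ(e)}(y)) (dist^{ρ(e)}(z))` of an edge `e = {y,z}`. -/
noncomputable def hlevel (e : Sym2 V) : ℕ∞ :=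
  Sym2.lift ⟨fun y z => max (S.adist (S.rho e) y) (S.adist (S.rho e) z),
    fun y z => max_comm _ _⟩ e

/-- The level `level(e) = n' · vlevel(e) + hlevel(e)` with `n' = |V| + 1 > |V|`,
giving the lexicographic order on (volume, height). -/
noncomputable def level (e : Sym2 V) : ℕ∞ :=
  ((Fintype.card V + 1 : ℕ) : ℕ∞) * S.vlevel e + S.hlevel e

/-- An augmenting path: an alternating path connecting two distinct vertices of `U`,
starting and ending with non-matching edges. -/
def IsAugPath {a b : V} (p : S.G.Walk a b) : Prop :=
  S.IsAltPath p ∧ a ∈ S.U ∧ b ∈ S.U ∧ a ≠ b ∧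
  (∀ e, p.edges.head? = some e → e ∉ S.M) ∧ (∀ e, p.edges.getLast? = some e → e ∉ S.M)

/-- The length of shortest augmenting paths of the system is `L`. -/
def ShortestAugLen (L : ℕ) : Prop :=
  (∃ a b : V, ∃ p : S.G.Walk a b, S.IsAugPath p ∧ p.length = L) ∧
  (∀ a b : V, ∀ p : S.G.Walk a b, S.IsAugPath p → L ≤ p.length)

/-- Vertices of the alternating base DAG `H`: all vertices except `f` and its neighbors. -/
def inH (v : V) : Prop := v ≠ S.f ∧ ¬ S.G.Adj S.f v

/-- The edge relation of the alternating base DAG `H`: an edge from `u` to `v`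
iff `v ∈ P(u)` (upward orientation); vertices of `U` are sinks. -/
def HStep (u v : V) : Prop := S.inH u ∧ S.inH v ∧ u ∉ S.U ∧ v ∈ S.Pset u

end Sys

/-- An alternating base tree of `S`: every non-root vertex has its parent chosen
from `P(u)`; the root is the super free vertex `f`. -/
structure ABT (S : Sys V) where
  par : V → V
  par_f : par S.f = S.f
  par_mem : ∀ u : V, u ≠ S.f → par u ∈ S.Pset u

namespace ABT

variable {S : Sys V} (T : ABT S)

/-- `v` belongs to the subtree `T(t)` rooted at `t`. -/
def inSub (t v : V) : Prop := ∃ n : ℕ, T.par^[n] v = t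

/-- `e` is a tree edge of `T`. -/
def IsTreeEdge (e : Sym2 V) : Prop := ∃ u : V, u ≠ S.f ∧ e = s(u, T.par u)

/-- `e` is an incoming edge of the subtree `T(t)`: a non-tree edge of `G` with
exactly one endpoint inside `T(t)`. -/
def Incoming (t : V) (e : Sym2 V) : Prop :=
  e ∈ S.G.edgeSet ∧ ¬ T.IsTreeEdge e ∧
  ∃ y z : V, e = s(y, z) ∧ T.inSub t z ∧ ¬ T.inSub t y

/-- `e` is a minimum-level incoming edge (MIE) of `T(t)`. -/
def IsMIE (t : V) (e : Sym2 V) : Prop :=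
  T.Incoming t e ∧ ∀ e', T.Incoming t e' → S.level e ≤ S.level e'

/-- `e` is a minimum-volume incoming edge of `T(t)`. -/
def IsMinVolIncoming (t : V) (e : Sym2 V) : Prop :=
  T.Incoming t e ∧ ∀ e', T.Incoming t e' → S.vlevel e ≤ S.vlevel e'

/-- The level of a path w.r.t. `T`: the maximum level of its non-tree edges
(`0` if it contains none). -/
noncomputable def pathLevel {a b : V} (p : S.G.Walk a b) : ℕ∞ :=
  sSup {x : ℕ∞ | ∃ e ∈ p.edges, ¬ T.IsTreeEdge e ∧ x = S.level e}

/-- The volume of a path w.r.t. `T`: the maximum volume of its non-tree edges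
(`0` if it contains none). -/
noncomputable def pathVlevel {a b : V} (p : S.G.Walk a b) : ℕ∞ :=
  sSup {x : ℕ∞ | ∃ e ∈ p.edges, ¬ T.IsTreeEdge e ∧ x = S.vlevel e}

end ABT

/-- An edge is crossable if its volume is `2ℓ+5` and some alternating base tree
puts its endpoints into subtrees rooted at two distinct free vertices. -/
def Sys.Crossable (S : Sys V) (ℓ : ℕ) (e : Sym2 V) : Prop :=
  S.vlevel e = ((2 * ℓ + 5 : ℕ) : ℕ∞) ∧
  ∃ T : ABT S, ∃ y z : V, e = s(y, z) ∧
    ∃ uy ∈ S.U, ∃ uz ∈ S.U, uy ≠ uz ∧ T.inSub uy y ∧ T.inSub uz z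

/-- `E*`: the set of crossable critical edges (crossable and not in `EP`). -/
def Sys.Estar (S : Sys V) (ℓ : ℕ) : Set (Sym2 V) :=
  {e | S.Crossable ℓ e ∧ e ∉ S.EPall}

/-- A (directed) path in the alternating base DAG `H`. -/
structure HPath (S : Sys V) where
  verts : List V
  ne : verts ≠ []
  chain : verts.Chain' S.HStep
  mem : ∀ v ∈ verts, S.inH v
  nodup : verts.Nodup

/-- The first vertex of an `H`-path. -/
def HPath.first {S : Sys V} (P : HPath S) : V := P.verts.head P.ne

/-- The last vertex of an `H`-path. -/
def HPath.last {S : Sys V} (P : HPath S) : V := P.verts.getLast P.ne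

/-- A double path `(P, Q, y, z)`: `{y,z} ∈ E*` and `P`, `Q` are vertex-disjoint
paths of `H` from `y` and `z` terminating at two distinct free vertices. -/
structure DoublePath (S : Sys V) (ℓ : ℕ) where
  P : HPath S
  Q : HPath S
  y : V
  z : V
  hy : P.first = y
  hz : Q.first = z
  he : s(y, z) ∈ S.Estar ℓ
  hPU : P.last ∈ S.U
  hQU : Q.last ∈ S.U
  hne : P.last ≠ Q.last
  hdisj : ∀ v ∈ P.verts, v ∉ Q.verts

/-- `T` respects an `H`-path `P` if consecutive vertices of `P` are
child–parent pairs of `T`. -/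
def ABT.RespectsPath {S : Sys V} (T : ABT S) (P : HPath S) : Prop :=
  P.verts.Chain' (fun u v => T.par u = v)

/-- `T` respects a double path if it respects both of its constituent paths. -/
def ABT.RespectsDP {S : Sys V} {ℓ : ℕ} (T : ABT S) (D : DoublePath S ℓ) : Prop :=
  T.RespectsPath D.P ∧ T.RespectsPath D.Q

/-- An in-tree of `H` rooted at a free vertex: every non-root vertex has a unique
outgoing `H`-edge inside the tree and all vertices reach the root.  (Paths ending
at a free vertex are a special case.) -/
structure InTree (S : Sys V) where
  W : Set V
  root : V
  g : V → V
  root_W : root ∈ W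
  root_U : root ∈ S.U
  step : ∀ v ∈ W, v ≠ root → S.HStep v (g v) ∧ g v ∈ W
  reach : ∀ v ∈ W, ∃ n : ℕ, g^[n] v = root

section MVAux

open SimpleGraph

variable {V : Type*} [Fintype V] [DecidableEq V] {S : Sys V}

private lemma chain'_alt_reverse {l : List (Sym2 V)}
    (h : List.Chain' (fun e₁ e₂ => (e₁ ∈ S.M ↔ e₂ ∉ S.M)) l) :
    List.Chain' (fun e₁ e₂ => (e₁ ∈ S.M ↔ e₂ ∉ S.M)) l.reverse :=
  List.isChain_reverse.mpr ((show List.IsChain _ l from h).imp fun _ _ hab => by tauto)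

private lemma lastParity {l : List (Sym2 V)}
    (hc : List.Chain' (fun e₁ e₂ => (e₁ ∈ S.M ↔ e₂ ∉ S.M)) l)
    {B : Prop} (hB : ∀ e, l.head? = some e → (e ∈ S.M ↔ B)) :
    ∀ e, l.getLast? = some e → (e ∈ S.M ↔ (B ↔ Odd l.length)) := by
  induction l generalizing B with
  | nil => intro e he; simp at he
  | cons a l ih =>
    intro e he
    cases l with
    | nil =>
      have hae : a = e := by simpa using he
      subst hae
      have h := hB a rfl
      have h1 : Odd ([a] : List (Sym2 V)).length := by simp
      tauto
    | cons b l' =>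
      have hab : (a ∈ S.M ↔ b ∉ S.M) := (List.isChain_cons_cons.mp hc).1
      have hc' := (List.isChain_cons_cons.mp hc).2
      have hB' : ∀ e, (b :: l').head? = some e → (e ∈ S.M ↔ ¬ B) := by
        intro e' he'
        simp only [List.head?_cons, Option.some_inj] at he'
        subst he'
        have h1 := hB a rfl
        tauto
      have hres := ih hc' hB' e (by simpa using he)
      have hodd : Odd ((a :: b :: l').length) ↔ ¬ Odd ((b :: l').length) := by
        simp only [List.length_cons]
        exact Nat.odd_add_one
      rw [hodd]
      tauto

private lemma altF_head_edge {v : V} (p : S.G.Walk S.f v) :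
    ∀ e, p.edges.head? = some e → e ∉ S.M := by
  cases p with
  | nil => intro e he; simp at he
  | cons h q =>
    intro e he hm
    simp only [SimpleGraph.Walk.edges_cons, List.head?_cons, Option.some_inj] at he
    exact S.f_free e hm (he ▸ Sym2.mem_mk_left _ _)

private lemma lastEdge {v : V} {p : S.G.Walk S.f v} (halt : S.IsAltPath p) :
    ∀ e, p.edges.getLast? = some e → (e ∈ S.M ↔ Even p.length) := by
  intro e he
  have h := lastParity halt.2 (B := False)
    (fun e' he' => by simpa using altF_head_edge p e' he') e he
  rw [SimpleGraph.Walk.length_edges] at h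
  rw [h, ← Nat.not_odd_iff_even]
  tauto

private lemma adist_le_of_walk {θ : Bool} {v : V} (p : S.G.Walk S.f v)
    (halt : S.IsAltPath p) (hpar : Odd p.length ↔ θ = true) :
    S.adist θ v ≤ (p.length : ℕ∞) :=
  sInf_le ⟨p, halt, rfl, hpar⟩

private lemma adist_attained {θ : Bool} {v : V} (h : S.adist θ v ≠ ⊤) :
    ∃ p : S.G.Walk S.f v, S.IsAltPath p ∧ (p.length : ℕ∞) = S.adist θ v ∧
      (Odd p.length ↔ θ = true) := by
  have hne : {n : ℕ∞ | ∃ p : S.G.Walk S.f v,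
      S.IsAltPath p ∧ (p.length : ℕ∞) = n ∧ (Odd p.length ↔ θ = true)}.Nonempty := by
    by_contra hemp
    rw [Set.not_nonempty_iff_eq_empty] at hemp
    apply h
    unfold Sys.adist
    rw [hemp, sInf_empty]
  have hmem := csInf_mem hne
  obtain ⟨p, halt, hlen, hpar⟩ := hmem
  exact ⟨p, halt, hlen, hpar⟩

private lemma distOrth_le_adist (θ : Bool) (v : V) : S.distOrth v ≤ S.adist θ v := by
  unfold Sys.distOrth Sys.op
  split_ifs with h
  · cases θ
    · exact le_of_lt h
    · exact le_rfl
  · cases θ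
    · exact le_rfl
    · exact le_of_not_gt h

private lemma distOrth_le_of_walk {v : V} (p : S.G.Walk S.f v) (halt : S.IsAltPath p) :
    S.distOrth v ≤ (p.length : ℕ∞) :=
  le_trans (distOrth_le_adist (decide (Odd p.length)) v)
    (adist_le_of_walk p halt (by simp))

private lemma adist_lt_card {θ : Bool} {v : V} (h : S.adist θ v ≠ ⊤) :
    S.adist θ v < ((Fintype.card V : ℕ) : ℕ∞) := by
  obtain ⟨p, halt, hlen, _⟩ := adist_attained h
  rw [← hlen]
  exact_mod_cast halt.1.length_lt

private lemma isPath_closed {v : V} {p : S.G.Walk v v} (h : p.IsPath) : p = SimpleGraph.Walk.nil := by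
  cases p with
  | nil => rfl
  | cons h' q =>
    exfalso
    rw [SimpleGraph.Walk.isPath_def, SimpleGraph.Walk.support_cons] at h
    exact (List.nodup_cons.mp h).1 (SimpleGraph.Walk.end_mem_support q)

private lemma distUnorth_f : S.distUnorth S.f = ⊤ := by
  have htrue : S.adist true S.f = ⊤ := by
    by_contra h
    obtain ⟨p, halt, _, hpar⟩ := adist_attained h
    have hnil := isPath_closed halt.1
    rw [hnil] at hpar
    simp at hpar
  unfold Sys.distUnorth Sys.op
  rw [htrue, if_neg not_top_lt]
  simpa using htrue

private lemma ep_witness (T : ABT S) {u : V} (hu : u ≠ S.f) :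
    ∃ p : S.G.Walk S.f u, S.IsAltPath p ∧ (p.length : ℕ∞) = S.distOrth u ∧
      p.edges.getLast? = some s(T.par u, u) := by
  have h := T.par_mem u hu
  simpa [Sys.Pset, Sys.EP] using h

private lemma distOrth_ne_top (T : ABT S) {u : V} (hu : u ≠ S.f) : S.distOrth u ≠ ⊤ := by
  obtain ⟨p, _, hlen, _⟩ := ep_witness T hu
  rw [← hlen]
  simp

private lemma isPath_append_left {a b c : V} {p : S.G.Walk a b} {q : S.G.Walk b c}
    (h : (p.append q).IsPath) : p.IsPath := by
  rw [SimpleGraph.Walk.isPath_def] at *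
  rw [SimpleGraph.Walk.support_append] at h
  exact h.of_append_left

private lemma isPath_append_right {a b c : V} {p : S.G.Walk a b} {q : S.G.Walk b c}
    (h : (p.append q).IsPath) : q.IsPath := by
  rw [SimpleGraph.Walk.isPath_def] at *
  rw [SimpleGraph.Walk.support_append] at h
  have h₂ : q.support.tail.Nodup := h.of_append_right
  have hd := List.disjoint_of_nodup_append h
  have hb : b ∉ q.support.tail := fun hmem => hd (SimpleGraph.Walk.end_mem_support p) hmem
  rw [SimpleGraph.Walk.support_eq_cons q]
  exact List.nodup_cons.mpr ⟨hb, h₂⟩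

private lemma split_alt {v w : V} {p : S.G.Walk S.f v} {p₁ : S.G.Walk S.f w} {p₂ : S.G.Walk w v}
    (halt : S.IsAltPath p) (hs : p = p₁.append p₂) :
    S.IsAltPath p₁ ∧ p₂.IsPath ∧
      List.Chain' (fun e₁ e₂ => (e₁ ∈ S.M ↔ e₂ ∉ S.M)) p₂.edges ∧
      (∀ e₁, p₁.edges.getLast? = some e₁ → ∀ e₂, p₂.edges.head? = some e₂ →
        (e₁ ∈ S.M ↔ e₂ ∉ S.M)) := by
  rw [hs] at halt
  obtain ⟨hp, hc⟩ := halt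
  simp only [List.Chain'] at hc
  rw [SimpleGraph.Walk.edges_append, List.isChain_append] at hc
  exact ⟨⟨isPath_append_left hp, hc.1⟩, isPath_append_right hp, hc.2.1,
    fun e₁ h₁ e₂ h₂ => hc.2.2 e₁ (Option.mem_def.mpr h₁) e₂ (Option.mem_def.mpr h₂)⟩

private lemma splice {w b : V} {q₁ : S.G.Walk S.f w} {r : S.G.Walk w b}
    (hq : S.IsAltPath q₁) (hr : r.IsPath)
    (hrc : List.Chain' (fun e₁ e₂ => (e₁ ∈ S.M ↔ e₂ ∉ S.M)) r.edges)
    (hdisj : ∀ v ∈ q₁.support, v ∈ r.support → v = w)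
    (hjunc : ∀ e₁, q₁.edges.getLast? = some e₁ → ∀ e₂, r.edges.head? = some e₂ →
      (e₁ ∈ S.M ↔ e₂ ∉ S.M)) :
    S.IsAltPath (q₁.append r) := by
  constructor
  · rw [SimpleGraph.Walk.isPath_def, SimpleGraph.Walk.support_append, List.nodup_append]
    refine ⟨hq.1.support_nodup, (hr.support_nodup).tail, ?_⟩
    intro v hv v' hv' hvv'
    subst hvv'
    have hvr : v ∈ r.support := List.mem_of_mem_tail hv'
    have hvw := hdisj v hv hvr
    subst hvw
    have := hr.support_nodup
    rw [SimpleGraph.Walk.support_eq_cons r] at this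
    exact (List.nodup_cons.mp this).1 hv'
  · simp only [List.Chain']
    rw [SimpleGraph.Walk.edges_append, List.isChain_append]
    exact ⟨hq.2, hrc, fun x hx y hy => hjunc x (Option.mem_def.mp hx) y (Option.mem_def.mp hy)⟩

private lemma firstHit (P : V → Prop) {a c : V} (w : S.G.Walk a c) :
    ¬ P a → P c → ∃ (y : V) (w₁ : S.G.Walk a y) (w₂ : S.G.Walk y c),
      w = w₁.append w₂ ∧ P y ∧ ∀ v ∈ w₁.support, P v → v = y := by
  induction w with
  | nil => intro ha hc; exact absurd hc ha
  | @cons a b c hadj q ih =>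
    intro ha hc
    by_cases hb : P b
    · refine ⟨b, SimpleGraph.Walk.cons hadj SimpleGraph.Walk.nil, q, by simp, hb, ?_⟩
      intro v hv hPv
      simp only [SimpleGraph.Walk.support_cons, SimpleGraph.Walk.support_nil,
        List.mem_cons, List.mem_singleton, List.not_mem_nil, or_false] at hv
      rcases hv with rfl | hv
      · exact absurd hPv ha
      · simpa using hv
    · obtain ⟨y, w₁, w₂, hs, hy, hfst⟩ := ih hb hc
      refine ⟨y, SimpleGraph.Walk.cons hadj w₁, w₂, by rw [SimpleGraph.Walk.cons_append, hs], hy, ?_⟩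
      intro v hv hPv
      rw [SimpleGraph.Walk.support_cons] at hv
      rcases List.mem_cons.mp hv with rfl | hv
      · exact absurd hPv ha
      · exact hfst v hv hPv

private lemma lastCross (P : V → Prop) {a c : V} {w : S.G.Walk a c} (hw : w.IsPath)
    (ha : ¬ P a) (hc : P c) :
    ∃ (y z : V) (w₁ : S.G.Walk a y) (hyz : S.G.Adj y z) (w₂ : S.G.Walk z c),
      w = w₁.append (SimpleGraph.Walk.cons hyz w₂) ∧ ¬ P y ∧ (∀ v ∈ w₂.support, P v) := by
  obtain ⟨y, r₁, r₂, hs, hy, hfst⟩ :=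
    firstHit (fun v => ¬ P v) w.reverse (by simpa using hc) (by simpa using ha)
  have hr₁path : r₁.IsPath := isPath_append_left (by rw [← hs]; exact hw.reverse)
  have hyc : y ≠ c := fun h => hy (h ▸ hc)
  obtain ⟨z, hyz, w₂, hr⟩ := r₁.reverse.exists_eq_cons_of_ne hyc
  refine ⟨y, z, r₂.reverse, hyz, w₂, ?_, hy, ?_⟩
  · rw [← SimpleGraph.Walk.reverse_reverse w, hs, SimpleGraph.Walk.reverse_append, hr]
  · intro v hv
    by_contra hPv
    have hv1 : v ∈ r₁.support := by
      have h2 : v ∈ r₁.reverse.support := by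
        rw [hr, SimpleGraph.Walk.support_cons]
        exact List.mem_cons_of_mem _ hv
      rw [SimpleGraph.Walk.support_reverse] at h2
      exact List.mem_reverse.mp h2
    have hvy := hfst v hv1 hPv
    subst hvy
    have hnd : r₁.reverse.IsPath := hr₁path.reverse
    rw [hr, SimpleGraph.Walk.isPath_def, SimpleGraph.Walk.support_cons] at hnd
    exact (List.nodup_cons.mp hnd).1 hv

private lemma rho_true_iff (e : Sym2 V) : (S.rho e = true) ↔ e ∈ S.M := by
  unfold Sys.rho
  split_ifs with h <;> simp [h]

private lemma distOrth_le_extend {y z : V} (p : S.G.Walk S.f y) (halt : S.IsAltPath p)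
    (hadj : S.G.Adj y z) (hm : (s(y, z) ∈ S.M ↔ Odd p.length)) :
    S.distOrth z ≤ (p.length : ℕ∞) + 1 := by
  by_cases hz : z ∈ p.support
  · have h1 := distOrth_le_of_walk (p.takeUntil z hz)
      (split_alt halt (p.take_spec hz).symm).1
    refine le_trans h1 (le_trans ?_ le_self_add)
    exact_mod_cast p.length_takeUntil_le hz
  · have hpath : (SimpleGraph.Walk.cons hadj SimpleGraph.Walk.nil : S.G.Walk y z).IsPath := by
      rw [SimpleGraph.Walk.isPath_def, SimpleGraph.Walk.support_cons,
        SimpleGraph.Walk.support_nil]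
      refine List.nodup_cons.mpr ⟨?_, List.nodup_singleton _⟩
      simp [hadj.ne]
    have hq : S.IsAltPath (p.append (SimpleGraph.Walk.cons hadj SimpleGraph.Walk.nil)) := by
      refine splice halt hpath (by
        rw [SimpleGraph.Walk.edges_cons, SimpleGraph.Walk.edges_nil]
        exact List.isChain_singleton _) ?_ ?_
      · intro v hv hv'
        simp only [SimpleGraph.Walk.support_cons, SimpleGraph.Walk.support_nil,
          List.mem_cons, List.mem_singleton, List.not_mem_nil, or_false] at hv'
        rcases hv' with rfl | hv'
        · rfl
        · exact absurd (hv' ▸ hv) hz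
      · intro e₁ h₁ e₂ h₂
        simp only [SimpleGraph.Walk.edges_cons, SimpleGraph.Walk.edges_nil,
          List.head?_cons, Option.some_inj] at h₂
        subst h₂
        rw [lastEdge halt e₁ h₁, ← Nat.not_odd_iff_even]
        tauto
    have h2 := distOrth_le_of_walk _ hq
    have h3 : (p.append (SimpleGraph.Walk.cons hadj SimpleGraph.Walk.nil)).length
        = p.length + 1 := by
      simp [SimpleGraph.Walk.length_append]
    rw [h3] at h2
    exact_mod_cast h2

private lemma distOrth_par_succ_le (T : ABT S) {u : V} (hu : u ≠ S.f) :
    S.distOrth (T.par u) + 1 ≤ S.distOrth u := by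
  obtain ⟨p, halt, hlen, hlast⟩ := ep_witness T hu
  obtain ⟨x, hadj, r', hr⟩ := SimpleGraph.Walk.exists_eq_cons_of_ne hu p.reverse
  have hx : s(T.par u, u) = s(u, x) := by
    have h1 : p.reverse.edges.head? = some s(u, x) := by
      rw [hr, SimpleGraph.Walk.edges_cons, List.head?_cons]
    rw [SimpleGraph.Walk.edges_reverse, List.head?_reverse, hlast] at h1
    exact Option.some_inj.mp h1
  have hxpar : x = T.par u := by
    rcases Sym2.eq_iff.mp hx with ⟨h1, h2⟩ | ⟨h1, h2⟩
    · rw [← h2]; exact h1.symm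
    · exact h1.symm
  subst hxpar
  have hrpath : p.reverse.IsPath := halt.1.reverse
  have hr'path : r'.IsPath := by rw [hr] at hrpath; exact hrpath.of_cons
  have hr'chain : List.Chain' (fun e₁ e₂ => (e₁ ∈ S.M ↔ e₂ ∉ S.M)) r'.reverse.edges := by
    have h2 : List.Chain' (fun e₁ e₂ => (e₁ ∈ S.M ↔ e₂ ∉ S.M)) p.reverse.edges := by
      rw [SimpleGraph.Walk.edges_reverse]
      exact chain'_alt_reverse halt.2
    rw [hr, SimpleGraph.Walk.edges_cons] at h2
    rw [SimpleGraph.Walk.edges_reverse]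
    exact chain'_alt_reverse h2.tail
  have halt' : S.IsAltPath r'.reverse := ⟨hr'path.reverse, hr'chain⟩
  have hlen' : r'.reverse.length + 1 = p.length := by
    have h3 := congrArg SimpleGraph.Walk.length hr
    rw [SimpleGraph.Walk.length_reverse, SimpleGraph.Walk.length_cons] at h3
    rw [SimpleGraph.Walk.length_reverse]
    omega
  have hdo := distOrth_le_of_walk r'.reverse halt'
  rw [← hlen, ← hlen']
  calc S.distOrth (T.par u) + 1 ≤ (r'.reverse.length : ℕ∞) + 1 := add_le_add_left hdo 1
    _ = ((r'.reverse.length + 1 : ℕ) : ℕ∞) := by push_cast; ring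

private lemma inSub_par {T : ABT S} {t v : V} (h : T.inSub t (T.par v)) : T.inSub t v := by
  obtain ⟨n, hn⟩ := h
  exact ⟨n + 1, by rw [Function.iterate_succ_apply]; exact hn⟩

private lemma not_inSub_f {T : ABT S} {t : V} (ht : t ≠ S.f) : ¬ T.inSub t S.f := by
  rintro ⟨n, hn⟩
  rw [Function.iterate_fixed T.par_f] at hn
  exact ht hn.symm

private lemma inSub_distOrth {T : ABT S} {t : V} (htf : t ≠ S.f) :
    ∀ {z : V}, T.inSub t z →
      S.distOrth t ≤ S.distOrth z ∧ (S.distOrth z ≤ S.distOrth t → z = t) := by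
  suffices H : ∀ (n : ℕ) (z : V), T.par^[n] z = t →
      S.distOrth t ≤ S.distOrth z ∧ (S.distOrth z ≤ S.distOrth t → z = t) by
    rintro z ⟨n, hn⟩; exact H n z hn
  intro n
  induction n with
  | zero => intro z hn; simp only [Function.iterate_zero_apply] at hn; subst hn
            exact ⟨le_rfl, fun _ => rfl⟩
  | succ n ih =>
    intro z hn
    have hzf : z ≠ S.f := by
      rintro rfl
      rw [Function.iterate_fixed T.par_f] at hn
      exact htf hn.symm
    have hstep := distOrth_par_succ_le T hzf
    have hn' : T.par^[n] (T.par z) = t := by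
      rw [← Function.iterate_succ_apply]; exact hn
    obtain ⟨h1, _⟩ := ih (T.par z) hn'
    have h2 : S.distOrth t + 1 ≤ S.distOrth z := le_trans (add_le_add_left h1 1) hstep
    constructor
    · exact le_trans h1 (le_trans le_self_add hstep)
    · intro hle
      exfalso
      have h3 : S.distOrth t + 1 ≤ S.distOrth t := le_trans h2 hle
      have h4 := distOrth_ne_top T htf
      obtain ⟨d, hd⟩ := WithTop.ne_top_iff_exists.mp h4
      rw [← hd] at h3
      have h5 : ((d + 1 : ℕ) : ℕ∞) ≤ ((d : ℕ) : ℕ∞) := by push_cast; exact h3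
      have h6 : d + 1 ≤ d := by exact_mod_cast h5
      omega

private lemma nontree_ne_f (T : ABT S) {e : Sym2 V} (he : e ∈ S.G.edgeSet)
    (hnt : ¬ T.IsTreeEdge e) {z : V} (hez : e = s(S.f, z)) : False := by
  have hadj : S.G.Adj S.f z := by rwa [hez, SimpleGraph.mem_edgeSet] at he
  obtain ⟨u, hu, rfl⟩ := S.f_adj z hadj
  have hwf : S.mid u ≠ S.f := hadj.ne'
  have h1 : S.adist true (S.mid u) ≤ 1 := by
    have hp : S.IsAltPath (SimpleGraph.Walk.cons hadj SimpleGraph.Walk.nil) := by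
      constructor
      · rw [SimpleGraph.Walk.isPath_def]; simp [hadj.ne]
      · simp [SimpleGraph.Walk.edges_cons]; exact List.isChain_singleton _
    have h2 := adist_le_of_walk (θ := true) (SimpleGraph.Walk.cons hadj SimpleGraph.Walk.nil) hp (by simp)
    simpa using h2
  have hne0 : S.distOrth (S.mid u) ≠ 0 := by
    intro h0
    have hnetop : S.distOrth (S.mid u) ≠ ⊤ := by rw [h0]; simp
    obtain ⟨p, _, hlen, _⟩ := adist_attained (θ := S.op (S.mid u)) (v := S.mid u) hnetop
    have hl0 : (p.length : ℕ∞) = 0 := by rw [hlen]; exact h0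
    have hl0' : p.length = 0 := by exact_mod_cast hl0
    exact hwf (SimpleGraph.Walk.eq_of_length_eq_zero hl0').symm
  have hd1 : S.distOrth (S.mid u) = 1 :=
    le_antisymm (le_trans (distOrth_le_adist true _) h1) (ENat.one_le_iff_ne_zero.mpr hne0)
  obtain ⟨p, _, hlen, hlast⟩ := ep_witness T hwf
  rw [hd1] at hlen
  have hplen : p.length = 1 := by exact_mod_cast hlen
  obtain ⟨b, h', pq', hpq'⟩ := SimpleGraph.Walk.exists_eq_cons_of_ne hadj.ne p
  have hq0 : pq'.length = 0 := by
    have hh := congrArg SimpleGraph.Walk.length hpq'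
    rw [SimpleGraph.Walk.length_cons] at hh
    omega
  have hq0' : pq'.edges = [] := by
    have hh := pq'.length_edges
    rw [hq0] at hh
    exact List.length_eq_zero_iff.mp hh
  have hfirst : p.edges = [s(S.f, b)] := by
    rw [hpq', SimpleGraph.Walk.edges_cons, hq0']
  rw [hfirst] at hlast
  simp only [List.getLast?_singleton, Option.some_inj] at hlast
  have hb : T.par (S.mid u) = S.f := by
    rcases Sym2.eq_iff.mp hlast with ⟨hh1, -⟩ | ⟨hh1, hh2⟩
    · exact hh1.symm
    · exact absurd hh1.symm hwf
  exact hnt ⟨S.mid u, hwf, by rw [hez, hb]; exact Sym2.eq_swap⟩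

end MVAux


set_option maxHeartbeats 1000000 in
/-- For any vertex `t` of an alternating base tree with `dist^β(t) < ∞`, the
unorthodox distance exceeds the height of a minimum-level incoming edge of `T(t)`:
`dist^β(t) > hlevel(e*(t))`. -/
theorem stmt9 (S : Sys V) (T : ABT S) (t : V) (ht : S.distUnorth t < ⊤)
    (estar : Sym2 V) (hestar : T.IsMIE t estar) :
    S.hlevel estar < S.distUnorth t := by
  classical
  have htf : t ≠ S.f := by
    rintro rfl
    rw [distUnorth_f] at ht
    exact absurd ht (lt_irrefl _)
  have hUne : S.adist (!S.op t) t ≠ ⊤ := ht.ne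
  obtain ⟨p, haltp, hlenp, hparp⟩ := adist_attained hUne
  have hOne : S.adist (S.op t) t ≠ ⊤ := distOrth_ne_top T htf
  obtain ⟨q, haltq, hlenq, hparq⟩ := adist_attained hOne
  set L := p.length with hLdef
  set Lα := q.length with hLαdef
  have hOeq : S.distOrth t = ((Lα : ℕ) : ℕ∞) := hlenq.symm
  have hUeq : S.distUnorth t = ((L : ℕ) : ℕ∞) := hlenp.symm
  have hdiff : L % 2 ≠ Lα % 2 := by
    have h1 := hparp; have h2 := hparq
    rw [Nat.odd_iff] at h1 h2
    cases hop : S.op t <;> rw [hop] at h1 h2 <;> simp at h1 h2 <;> omega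
  have hLαle : Lα ≤ L := by
    have hle : S.distOrth t ≤ S.adist (!S.op t) t := distOrth_le_adist _ t
    rw [hOeq, ← hlenp] at hle
    exact_mod_cast hle
  have hLαL : Lα < L := by omega
  have hnotf : ¬ T.inSub t S.f := not_inSub_f htf
  obtain ⟨y, z, p₁, hyz, p₂, hsplit, hyout, hp₂in⟩ :=
    lastCross (T.inSub t) haltp.1 hnotf ⟨0, rfl⟩
  set k := p₁.length with hkdef
  set m := p₂.length with hmdef
  have hklm : k + 1 + m = L := by
    have hh := congrArg SimpleGraph.Walk.length hsplit
    rw [SimpleGraph.Walk.length_append, SimpleGraph.Walk.length_cons] at hh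
    omega
  obtain ⟨haltp₁, -, -, -⟩ := split_alt haltp hsplit
  have hsplit0 : p = (p₁.append (SimpleGraph.Walk.cons hyz SimpleGraph.Walk.nil)).append p₂ := by
    rw [hsplit, ← SimpleGraph.Walk.append_assoc, SimpleGraph.Walk.cons_append,
      SimpleGraph.Walk.nil_append]
  obtain ⟨halt0, hp₂path, hch₂, -⟩ := split_alt haltp hsplit0
  have hlen0 : (p₁.append (SimpleGraph.Walk.cons hyz SimpleGraph.Walk.nil)).length = k + 1 := by
    rw [SimpleGraph.Walk.length_append, SimpleGraph.Walk.length_cons,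
      SimpleGraph.Walk.length_nil]
  have he'last : (p₁.append (SimpleGraph.Walk.cons hyz SimpleGraph.Walk.nil)).edges.getLast?
      = some s(y, z) := by
    rw [SimpleGraph.Walk.edges_append, SimpleGraph.Walk.edges_cons, SimpleGraph.Walk.edges_nil]
    exact List.getLast?_concat
  have he'M : (s(y, z) ∈ S.M) ↔ Even (k + 1) := by
    have hh := lastEdge halt0 _ he'last
    rwa [hlen0] at hh
  have hrho' : (S.rho s(y, z) = true) ↔ Even (k + 1) := (rho_true_iff _).trans he'M
  have hay : S.adist (S.rho s(y, z)) y ≤ ((k : ℕ) : ℕ∞) :=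
    adist_le_of_walk p₁ haltp₁ (by
      rw [hrho', Nat.even_add_one, Nat.not_even_iff_odd])
  have hzin : T.inSub t z := hp₂in z p₂.start_mem_support
  have hinc' : T.Incoming t s(y, z) := by
    refine ⟨(S.G.mem_edgeSet).mpr hyz, ?_, y, z, rfl, hzin, hyout⟩
    rintro ⟨u₀, hu₀, heq⟩
    rcases Sym2.eq_iff.mp heq with ⟨hA1, hA2⟩ | ⟨hB1, hB2⟩
    · subst hA1
      exact hyout (inSub_par (by rw [← hA2]; exact hzin))
    · subst hB2
      obtain ⟨n, hn⟩ := hzin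
      cases n with
      | succ n =>
        apply hyout
        rw [Function.iterate_succ_apply, ← hB1] at hn
        exact ⟨n, hn⟩
      | zero =>
        simp only [Function.iterate_zero_apply] at hn
        subst hn
        have hp₂nil := isPath_closed hp₂path
        have hplast : p.edges.getLast? = some s(y, z) := by
          rw [hsplit0, hp₂nil, SimpleGraph.Walk.append_nil]
          exact he'last
        have h3 : (s(y, z) ∈ S.M) ↔ Even L := lastEdge haltp _ hplast
        obtain ⟨pq, haltpq, hlenpq, hlastpq⟩ := ep_witness T htf
        have hpqlen : pq.length = Lα := by
          have hh : ((pq.length : ℕ) : ℕ∞) = ((Lα : ℕ) : ℕ∞) := by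
            rw [hlenpq, hOeq]
          exact_mod_cast hh
        have h4 : (s(T.par z, z) ∈ S.M) ↔ Even Lα := by
          have hh := lastEdge haltpq _ hlastpq
          rwa [hpqlen] at hh
        rw [hB1] at h3
        have h5 : Even L ↔ Even Lα := h3.symm.trans h4
        rw [Nat.even_iff, Nat.even_iff] at h5
        omega
  have hminE := hestar.2 _ hinc'
  have hend : ¬ (k + 1 ≤ Lα) := by
    intro hk1
    have hdoz : S.distOrth z ≤ ((k + 1 : ℕ) : ℕ∞) := by
      have hh := distOrth_le_of_walk _ halt0
      rwa [hlen0] at hh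
    have hzt : z = t := by
      obtain ⟨hle1, heq1⟩ := inSub_distOrth htf hzin
      apply heq1
      calc S.distOrth z ≤ ((k + 1 : ℕ) : ℕ∞) := hdoz
        _ ≤ ((Lα : ℕ) : ℕ∞) := by exact_mod_cast hk1
        _ = S.distOrth t := hOeq.symm
    subst hzt
    have hp₂nil := isPath_closed hp₂path
    have hm0 : m = 0 := by rw [hmdef, hp₂nil]; rfl
    omega
  obtain ⟨w, q₁, q₂, hqs, hwP, hfst⟩ := firstHit (fun v => v ∈ p₂.support) q
    (fun hf => hnotf (hp₂in _ hf)) p₂.end_mem_support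
  set i := q₁.length with hidef
  have hiLα : i ≤ Lα := by
    have hh := congrArg SimpleGraph.Walk.length hqs
    rw [SimpleGraph.Walk.length_append] at hh
    omega
  obtain ⟨haltq₁, hq₂path, -, -⟩ := split_alt haltq hqs
  obtain ⟨p₂a, p₂b, hp₂spec, hp₂apath, hp₂bpath, hsubA, hsubB⟩ :
      ∃ (p₂a : S.G.Walk z w) (p₂b : S.G.Walk w t),
        p₂a.append p₂b = p₂ ∧ p₂a.IsPath ∧ p₂b.IsPath ∧
        p₂a.support ⊆ p₂.support ∧ p₂b.support ⊆ p₂.support :=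
    ⟨p₂.takeUntil w hwP, p₂.dropUntil w hwP, p₂.take_spec hwP,
      hp₂path.takeUntil hwP, hp₂path.dropUntil hwP,
      p₂.support_takeUntil_subset hwP, p₂.support_dropUntil_subset hwP⟩
  set la := p₂a.length with hladef
  set lb := p₂b.length with hlbdef
  have hlab : la + lb = m := by
    have hh := congrArg SimpleGraph.Walk.length hp₂spec
    rw [SimpleGraph.Walk.length_append] at hh
    omega
  have hch₂' : List.Chain' (fun e₁ e₂ => (e₁ ∈ S.M ↔ e₂ ∉ S.M)) (p₂a.append p₂b).edges := by
    rw [hp₂spec]; exact hch₂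
  simp only [List.Chain'] at hch₂'
  rw [SimpleGraph.Walk.edges_append, List.isChain_append] at hch₂'
  have hsplitA : p = (p₁.append (SimpleGraph.Walk.cons hyz p₂a)).append p₂b := by
    rw [hsplit, ← hp₂spec, ← SimpleGraph.Walk.append_assoc, SimpleGraph.Walk.cons_append]
  obtain ⟨haltA, hp₂bpath', hchBc, hjuncB⟩ := split_alt haltp hsplitA
  have hlenA : (p₁.append (SimpleGraph.Walk.cons hyz p₂a)).length = k + 1 + la := by
    rw [SimpleGraph.Walk.length_append, SimpleGraph.Walk.length_cons]
    omega
  have hdisjA : ∀ v ∈ q₁.support, v ∈ p₂a.support → v = w := fun v hv hv' =>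
    hfst v hv (hsubA hv')
  have hdisjB : ∀ v ∈ q₁.support, v ∈ p₂b.support → v = w := fun v hv hv' =>
    hfst v hv (hsubB hv')
  have hq₁last : ∀ e₁, q₁.edges.getLast? = some e₁ → ((e₁ ∈ S.M) ↔ Even i) :=
    fun e₁ h₁ => lastEdge haltq₁ e₁ h₁
  have hsurg : S.adist (S.rho s(y, z)) z ≤ ((Lα + m : ℕ) : ℕ∞) := by
    by_cases hpc : (i + k + la) % 2 = 0
    · have hWalt : S.IsAltPath (q₁.append p₂a.reverse) := by
        refine splice haltq₁ hp₂apath.reverse ?_ ?_ ?_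
        · rw [SimpleGraph.Walk.edges_reverse]
          exact chain'_alt_reverse hch₂'.1
        · intro v hv hv'
          rw [SimpleGraph.Walk.support_reverse, List.mem_reverse] at hv'
          exact hdisjA v hv hv'
        · intro e₁ h₁ e₂ h₂
          rw [SimpleGraph.Walk.edges_reverse, List.head?_reverse] at h₂
          have h5 : (s(y, z) :: p₂a.edges).getLast? = some e₂ := by
            have hcons : s(y, z) :: p₂a.edges = [s(y, z)] ++ p₂a.edges := rfl
            rw [hcons, List.getLast?_append, h₂]
            rfl
          have hAlast : (p₁.append (SimpleGraph.Walk.cons hyz p₂a)).edges.getLast?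
              = some e₂ := by
            rw [SimpleGraph.Walk.edges_append, SimpleGraph.Walk.edges_cons,
              List.getLast?_append, h5]
            rfl
          have he₂ : (e₂ ∈ S.M) ↔ Even (k + 1 + la) := by
            have hh := lastEdge haltA _ hAlast
            rwa [hlenA] at hh
          rw [hq₁last e₁ h₁, he₂, Nat.even_iff, Nat.even_iff]
          omega
      have hlenW : (q₁.append p₂a.reverse).length = i + la := by
        rw [SimpleGraph.Walk.length_append, SimpleGraph.Walk.length_reverse]
      have hparW : Odd ((q₁.append p₂a.reverse).length) ↔ (S.rho s(y, z) = true) := by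
        rw [hlenW, hrho', Nat.odd_iff, Nat.even_iff]
        omega
      have hb := adist_le_of_walk _ hWalt hparW
      rw [hlenW] at hb
      calc S.adist (S.rho s(y, z)) z ≤ ((i + la : ℕ) : ℕ∞) := hb
        _ ≤ ((Lα + m : ℕ) : ℕ∞) := by
            have hh : i + la ≤ Lα + m := by omega
            exact_mod_cast hh
    · exfalso
      apply hend
      have hlb1 : 1 ≤ lb := by
        by_contra h0
        push_neg at h0
        have hlb0 : p₂b.length = 0 := by rw [← hlbdef]; omega
        have hwt : w = t := SimpleGraph.Walk.eq_of_length_eq_zero hlb0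
        subst hwt
        have hq₂nil := isPath_closed hq₂path
        have hiLα' : i = Lα := by
          have hh := congrArg SimpleGraph.Walk.length hqs
          rw [SimpleGraph.Walk.length_append, hq₂nil] at hh
          simp only [SimpleGraph.Walk.length_nil] at hh
          omega
        omega
      have hwt : w ≠ t := by
        intro hzz
        subst hzz
        have hnil := isPath_closed hp₂bpath
        have hzero : p₂b.length = 0 := by rw [hnil]; rfl
        omega
      obtain ⟨v₂, hwv₂, p₂b', hp₂b⟩ := SimpleGraph.Walk.exists_eq_cons_of_ne hwt p₂b
      have hAne : (p₁.append (SimpleGraph.Walk.cons hyz p₂a)).edges ≠ [] := by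
        intro h0
        have hh := congrArg List.length h0
        rw [SimpleGraph.Walk.length_edges, hlenA] at hh
        simp at hh
      obtain ⟨e₁, hAlast⟩ : ∃ e₁, (p₁.append (SimpleGraph.Walk.cons hyz p₂a)).edges.getLast?
          = some e₁ := ⟨_, List.getLast?_eq_getLast hAne⟩
      have he₁ : (e₁ ∈ S.M) ↔ Even (k + 1 + la) := by
        have hh := lastEdge haltA _ hAlast
        rwa [hlenA] at hh
      have hhead : ((s(w, v₂) ∈ S.M)) ↔ ¬ Even (k + 1 + la) := by
        have h9 := hjuncB e₁ hAlast s(w, v₂)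
          (by rw [hp₂b, SimpleGraph.Walk.edges_cons]; rfl)
        constructor
        · intro hm hev
          exact (h9.mp (he₁.mpr hev)) hm
        · intro hnev
          by_contra hnm
          exact hnev (he₁.mp (h9.mpr hnm))
      have hWalt : S.IsAltPath (q₁.append p₂b) := by
        refine splice haltq₁ hp₂bpath hch₂'.2.1 hdisjB ?_
        intro e₁' h₁' e₂' h₂'
        rw [hp₂b, SimpleGraph.Walk.edges_cons, List.head?_cons] at h₂'
        have he₂' : e₂' = s(w, v₂) := (Option.some_inj.mp h₂').symm
        subst he₂'
        have h10 : Even i ↔ Even (k + 1 + la) := by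
          rw [Nat.even_iff, Nat.even_iff]
          omega
        rw [hq₁last e₁' h₁', h10]
        constructor
        · intro hev hm
          exact (hhead.mp hm) hev
        · intro hnm
          by_contra hnev
          exact hnm (hhead.mpr hnev)
      have hlenW : (q₁.append p₂b).length = i + lb := by
        rw [SimpleGraph.Walk.length_append]
      have hparW : Odd ((q₁.append p₂b).length) ↔ ((!S.op t) = true) := by
        rw [hlenW]
        have h11 : Odd (i + lb) ↔ Odd L := by
          rw [Nat.odd_iff, Nat.odd_iff]; omega
        exact h11.trans hparp
      have hb := adist_le_of_walk _ hWalt hparW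
      rw [hlenW] at hb
      have hLle : L ≤ i + lb := by
        have hh : ((L : ℕ) : ℕ∞) ≤ ((i + lb : ℕ) : ℕ∞) := by
          rw [hlenp]; exact hb
        exact_mod_cast hh
      omega
  have hvl' : S.vlevel s(y, z) ≤ ((L + Lα : ℕ) : ℕ∞) := by
    unfold Sys.vlevel
    rw [Sym2.lift_mk]
    calc S.adist (S.rho s(y, z)) y + S.adist (S.rho s(y, z)) z + 1
        ≤ ((k : ℕ) : ℕ∞) + ((Lα + m : ℕ) : ℕ∞) + 1 := add_le_add (add_le_add hay hsurg) le_rfl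
      _ = ((k + (Lα + m) + 1 : ℕ) : ℕ∞) := by push_cast; ring
      _ ≤ ((L + Lα : ℕ) : ℕ∞) := by
          have hh : k + (Lα + m) + 1 ≤ L + Lα := by omega
          exact_mod_cast hh
  rw [hUeq]
  by_contra hcon
  push_neg at hcon
  obtain ⟨hincE, -⟩ := hestar
  obtain ⟨heE, hntE, y', z', heqE, hz'in, hy'out⟩ := hincE
  subst heqE
  have hhlE : S.hlevel s(y', z')
      = max (S.adist (S.rho s(y', z')) y') (S.adist (S.rho s(y', z')) z') := by
    unfold Sys.hlevel; rw [Sym2.lift_mk]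
  have hvlEdef : S.vlevel s(y', z')
      = S.adist (S.rho s(y', z')) y' + S.adist (S.rho s(y', z')) z' + 1 := by
    unfold Sys.vlevel; rw [Sym2.lift_mk]
  set n' : ℕ∞ := ((Fintype.card V + 1 : ℕ) : ℕ∞) with hn'def
  have hn'top : n' ≠ ⊤ := by rw [hn'def]; exact (ENat.coe_lt_top _).ne
  have hvlsplit : ∀ (yy zz : V), S.adist (S.rho s(yy, zz)) yy ≤ S.vlevel s(yy, zz)
      ∧ S.adist (S.rho s(yy, zz)) zz ≤ S.vlevel s(yy, zz) := by
    intro yy zz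
    unfold Sys.vlevel; rw [Sym2.lift_mk]
    constructor
    · exact le_trans le_self_add le_self_add
    · exact le_trans le_add_self le_self_add
  have hvfin' : S.vlevel s(y, z) ≠ ⊤ := by
    intro h0
    rw [h0] at hvl'
    exact (ENat.coe_lt_top (L + Lα)).ne (top_le_iff.mp hvl')
  have hay_ne : S.adist (S.rho s(y, z)) y ≠ ⊤ := fun h0 =>
    hvfin' (top_le_iff.mp (h0 ▸ (hvlsplit y z).1))
  have haz_ne : S.adist (S.rho s(y, z)) z ≠ ⊤ := fun h0 =>
    hvfin' (top_le_iff.mp (h0 ▸ (hvlsplit y z).2))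
  have hhl'fin : S.hlevel s(y, z) < n' := by
    unfold Sys.hlevel; rw [Sym2.lift_mk, hn'def]
    apply max_lt
    · exact lt_of_lt_of_le (adist_lt_card hay_ne) (by exact_mod_cast Nat.le_succ _)
    · exact lt_of_lt_of_le (adist_lt_card haz_ne) (by exact_mod_cast Nat.le_succ _)
  have hlevdef : ∀ e : Sym2 V, S.level e = n' * S.vlevel e + S.hlevel e := fun e => by
    unfold Sys.level; rw [hn'def]
  have hlex1 : S.vlevel s(y', z') ≤ S.vlevel s(y, z) := by
    by_contra hgt
    push_neg at hgt
    have h1 : S.level s(y, z) < S.level s(y', z') := by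
      rw [hlevdef, hlevdef]
      calc n' * S.vlevel s(y, z) + S.hlevel s(y, z)
          < n' * S.vlevel s(y, z) + n' :=
            WithTop.add_lt_add_left (WithTop.mul_ne_top hn'top hvfin') hhl'fin
        _ = n' * (S.vlevel s(y, z) + 1) := by rw [mul_add, mul_one]
        _ ≤ n' * S.vlevel s(y', z') :=
            mul_le_mul_right ((ENat.add_one_le_iff hvfin').mpr hgt) n'
        _ ≤ n' * S.vlevel s(y', z') + S.hlevel s(y', z') := le_self_add
    exact absurd hminE (not_le.mpr h1)
  have hvEfin : S.vlevel s(y', z') ≠ ⊤ := fun h0 =>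
    hvfin' (top_le_iff.mp (h0 ▸ hlex1))
  have haE_ne : S.adist (S.rho s(y', z')) y' ≠ ⊤ := fun h0 =>
    hvEfin (top_le_iff.mp (h0 ▸ (hvlsplit y' z').1))
  have hbE_ne : S.adist (S.rho s(y', z')) z' ≠ ⊤ := fun h0 =>
    hvEfin (top_le_iff.mp (h0 ▸ (hvlsplit y' z').2))
  obtain ⟨aN, haN'⟩ := WithTop.ne_top_iff_exists.mp haE_ne
  obtain ⟨bN, hbN'⟩ := WithTop.ne_top_iff_exists.mp hbE_ne
  have haN : ((aN : ℕ) : ℕ∞) = S.adist (S.rho s(y', z')) y' := by exact_mod_cast haN'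
  have hbN : ((bN : ℕ) : ℕ∞) = S.adist (S.rho s(y', z')) z' := by exact_mod_cast hbN'
  have hbLα : Lα ≤ bN := by
    have h1 := (inSub_distOrth htf hz'in).1
    have h2 : S.distOrth z' ≤ S.adist (S.rho s(y', z')) z' := distOrth_le_adist _ _
    have h3 : ((Lα : ℕ) : ℕ∞) ≤ ((bN : ℕ) : ℕ∞) := by
      rw [hbN, ← hOeq]
      exact le_trans h1 h2
    exact_mod_cast h3
  have haLα : Lα ≤ aN + 1 := by
    obtain ⟨u, haltu, hlenu, hparu⟩ := adist_attained haE_ne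
    have hulen : u.length = aN := by
      have hh : ((u.length : ℕ) : ℕ∞) = ((aN : ℕ) : ℕ∞) := by rw [hlenu, ← haN]
      exact_mod_cast hh
    have hadjE : S.G.Adj y' z' := (S.G.mem_edgeSet).mp heE
    have hmE : (s(y', z') ∈ S.M ↔ Odd u.length) := by
      rw [← rho_true_iff]
      exact hparu.symm
    have h3 := distOrth_le_extend u haltu hadjE hmE
    have h4 : ((Lα : ℕ) : ℕ∞) ≤ ((aN + 1 : ℕ) : ℕ∞) := by
      rw [← hOeq]
      calc S.distOrth t ≤ S.distOrth z' := (inSub_distOrth htf hz'in).1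
        _ ≤ (u.length : ℕ∞) + 1 := h3
        _ = ((aN + 1 : ℕ) : ℕ∞) := by rw [hulen]; push_cast; ring
    exact_mod_cast h4
  have hmaxE : L ≤ aN ∨ L ≤ bN := by
    have h1 : ((L : ℕ) : ℕ∞) ≤ max ((aN : ℕ) : ℕ∞) ((bN : ℕ) : ℕ∞) := by
      rw [haN, hbN, ← hhlE]
      exact hcon
    rcases le_max_iff.mp h1 with h | h
    · exact Or.inl (by exact_mod_cast h)
    · exact Or.inr (by exact_mod_cast h)
  have hsumE : aN + bN + 1 ≤ L + Lα := by
    have e1 : ((aN + bN + 1 : ℕ) : ℕ∞) = S.vlevel s(y', z') := by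
      rw [hvlEdef, ← haN, ← hbN]; push_cast; ring
    have h1 : ((aN + bN + 1 : ℕ) : ℕ∞) ≤ ((L + Lα : ℕ) : ℕ∞) := by
      rw [e1]
      exact le_trans hlex1 hvl'
    exact_mod_cast h1
  have hbNL : L ≤ bN := by
    rcases hmaxE with h | h
    · omega
    · exact h
  have hvleq : S.vlevel s(y, z) = S.vlevel s(y', z') := by
    refine le_antisymm ?_ hlex1
    have e1 : ((aN + bN + 1 : ℕ) : ℕ∞) = S.vlevel s(y', z') := by
      rw [hvlEdef, ← haN, ← hbN]; push_cast; ring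
    have h1 : ((L + Lα : ℕ) : ℕ∞) ≤ S.vlevel s(y', z') := by
      rw [← e1]
      have hh : L + Lα ≤ aN + bN + 1 := by omega
      exact_mod_cast hh
    exact le_trans hvl' h1
  have hlex2 : S.hlevel s(y', z') ≤ S.hlevel s(y, z) := by
    have h1 := hminE
    rw [hlevdef, hlevdef, hvleq] at h1
    exact (WithTop.add_le_add_iff_left (WithTop.mul_ne_top hn'top hvEfin)).mp h1
  have hfin : ((L : ℕ) : ℕ∞) ≤ max ((k : ℕ) : ℕ∞) ((Lα + m : ℕ) : ℕ∞) := by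
    calc ((L : ℕ) : ℕ∞) ≤ S.hlevel s(y', z') := hcon
      _ ≤ S.hlevel s(y, z) := hlex2
      _ ≤ max ((k : ℕ) : ℕ∞) ((Lα + m : ℕ) : ℕ∞) := by
          unfold Sys.hlevel; rw [Sym2.lift_mk]
          exact max_le_max hay hsurg
  rcases le_max_iff.mp hfin with h | h
  · have hkL : L ≤ k := by exact_mod_cast h
    omega
  · have hmL : L ≤ Lα + m := by exact_mod_cast h
    exact hend (by omega)
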